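/- With notation as in the comass-one setting: for any t ∈ ℝ, the vector (X₁ + tU)/√(1+t²) together with X₂,...,Xₘ forms an orthonormal system, and Ω((X₁+tU)/√(1+t²), X₂,...,Xₘ) = (cosθ + t·a)/√(1+t²), where a = Ω(U,X₂,...,Xₘ). Consequently √(cos²θ + a²) ≤ 1. -/

import Mathlib

open scoped RealInnerProductSpace

/-- In the comass-one setting: for every `t ∈ ℝ` the vector `(X₁ + tU)/√(1+t²)`
together with `X₂,...,Xₘ` is an orthonormal system, the form evaluates on it to
`(cosθ + t·a)/√(1+t²)` where `cosθ = Ω(X₁,...,Xₘ)` and `a = Ω(U,X₂,...,Xₘ)`;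
consequently `√(cos²θ + a²) ≤ 1`. -/
theorem stmt_1 {V : Type*} [NormedAddCommGroup V] [InnerProductSpace ℝ V]
    {m : ℕ} (hm : 0 < m) (Ω : AlternatingMap ℝ V ℝ (Fin m))
    (hcomass : ∀ Y : Fin m → V, Orthonormal ℝ Y → |Ω Y| ≤ 1)
    (X : Fin m → V) (hX : Orthonormal ℝ X) (U : V) (hU : ‖U‖ = 1)
    (hUX : ∀ i : Fin m, ⟪U, X i⟫ = 0) :
    (∀ t : ℝ,
      Orthonormal ℝ
        (Function.update X ⟨0, hm⟩ ((Real.sqrt (1 + t ^ 2))⁻¹ • (X ⟨0, hm⟩ + t • U))) ∧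
      Ω (Function.update X ⟨0, hm⟩ ((Real.sqrt (1 + t ^ 2))⁻¹ • (X ⟨0, hm⟩ + t • U))) =
        (Ω X + t * Ω (Function.update X ⟨0, hm⟩ U)) / Real.sqrt (1 + t ^ 2)) ∧
    Real.sqrt ((Ω X) ^ 2 + (Ω (Function.update X ⟨0, hm⟩ U)) ^ 2) ≤ 1 := by
  set p : Fin m := ⟨0, hm⟩ with hp
  rw [orthonormal_iff_ite] at hX
  -- helper: updating slot p with a unit vector orthogonal to the X j (j ≠ p)
  have key : ∀ W : V, ‖W‖ = 1 → (∀ j : Fin m, j ≠ p → ⟪W, X j⟫ = 0) →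
      Orthonormal ℝ (Function.update X p W) := by
    intro W hW hWX
    rw [orthonormal_iff_ite]
    intro i j
    rcases eq_or_ne i p with hi | hi <;> rcases eq_or_ne j p with hj | hj
    · subst hi; subst hj
      simp [Function.update_self, real_inner_self_eq_norm_sq, hW]
    · subst hi
      rw [Function.update_self, Function.update_of_ne hj, hWX j hj, if_neg (Ne.symm hj)]
    · subst hj
      rw [Function.update_of_ne hi, Function.update_self, real_inner_comm, hWX i hi,
        if_neg hi]
    · rw [Function.update_of_ne hi, Function.update_of_ne hj, hX i j]
  have hXp : ‖X p‖ = 1 := by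
    have h := hX p p
    rw [if_pos rfl, real_inner_self_eq_norm_sq] at h
    nlinarith [norm_nonneg (X p)]
  have hXpXj : ∀ j : Fin m, j ≠ p → ⟪X p, X j⟫ = 0 := by
    intro j hj
    have h := hX p j
    rwa [if_neg (Ne.symm hj)] at h
  set c : ℝ := Ω X with hc
  set a : ℝ := Ω (Function.update X p U) with ha
  have main : ∀ t : ℝ,
      Orthonormal ℝ (Function.update X p ((Real.sqrt (1 + t ^ 2))⁻¹ • (X p + t • U))) ∧
      Ω (Function.update X p ((Real.sqrt (1 + t ^ 2))⁻¹ • (X p + t • U))) =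
        (c + t * a) / Real.sqrt (1 + t ^ 2) := by
    intro t
    have hpos : (0 : ℝ) < 1 + t ^ 2 := by positivity
    have hs : (0 : ℝ) < Real.sqrt (1 + t ^ 2) := Real.sqrt_pos.mpr hpos
    have hnorm2 : ‖X p + t • U‖ ^ 2 = 1 + t ^ 2 := by
      rw [norm_add_sq_real, real_inner_smul_right, real_inner_comm, hUX p, norm_smul,
        hXp, hU, Real.norm_eq_abs, mul_pow, sq_abs]
      ring
    have hnorm : ‖X p + t • U‖ = Real.sqrt (1 + t ^ 2) := by
      rw [← hnorm2]
      exact (Real.sqrt_sq (norm_nonneg _)).symm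
    constructor
    · apply key
      · rw [norm_smul, hnorm, Real.norm_eq_abs, abs_inv, abs_of_pos hs]
        field_simp
      · intro j hj
        rw [real_inner_smul_left, inner_add_left, real_inner_smul_left, hXpXj j hj,
          hUX j]
        ring
    · have h1 : Ω (Function.update X p ((Real.sqrt (1 + t ^ 2))⁻¹ • (X p + t • U))) =
          (Real.sqrt (1 + t ^ 2))⁻¹ • Ω (Function.update X p (X p + t • U)) :=
        Ω.map_update_smul X p _ _
      have h2 : Ω (Function.update X p (X p + t • U)) =
          Ω (Function.update X p (X p)) + Ω (Function.update X p (t • U)) :=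
        Ω.map_update_add X p _ _
      have h3 : Ω (Function.update X p (t • U)) = t • Ω (Function.update X p U) :=
        Ω.map_update_smul X p _ _
      rw [h1, h2, h3, Function.update_eq_self]
      rw [smul_eq_mul, smul_eq_mul, ← ha, ← hc, div_eq_inv_mul]
  refine ⟨main, ?_⟩
  -- from orthonormality: (c + t a)² ≤ 1 + t² for all t
  have bound : ∀ t : ℝ, (c + t * a) ^ 2 ≤ 1 + t ^ 2 := by
    intro t
    obtain ⟨horth, hval⟩ := main t
    have h := hcomass _ horth
    rw [hval, abs_div, abs_of_pos (Real.sqrt_pos.mpr (by positivity : (0:ℝ) < 1 + t ^ 2)),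
      div_le_one (Real.sqrt_pos.mpr (by positivity))] at h
    have h2 : (c + t * a) ^ 2 ≤ (Real.sqrt (1 + t ^ 2)) ^ 2 :=
      sq_le_sq' (by linarith [neg_abs_le (c + t * a)]) (le_trans (le_abs_self _) h)
    calc (c + t * a) ^ 2 ≤ (Real.sqrt (1 + t ^ 2)) ^ 2 := h2
      _ = 1 + t ^ 2 := Real.sq_sqrt (by positivity)
  have hsum : c ^ 2 + a ^ 2 ≤ 1 := by
    rcases eq_or_ne c 0 with hc0 | hc0
    · have haU : |a| ≤ 1 := hcomass _ (key U hU fun j _ => hUX j)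
      rw [hc0]
      nlinarith [sq_abs a, abs_nonneg a]
    · have h := bound (a / c)
      have hc2 : (0 : ℝ) < c ^ 2 := by positivity
      have h2 := mul_le_mul_of_nonneg_right h hc2.le
      have e1 : (c + a / c * a) ^ 2 * c ^ 2 = (c ^ 2 + a ^ 2) ^ 2 := by
        field_simp
      have e2 : (1 + (a / c) ^ 2) * c ^ 2 = c ^ 2 + a ^ 2 := by
        field_simp
      rw [e1, e2] at h2
      nlinarith [sq_nonneg c, sq_nonneg a]
  calc Real.sqrt (c ^ 2 + a ^ 2) ≤ Real.sqrt 1 := Real.sqrt_le_sqrt hsum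
    _ = 1 := Real.sqrt_one
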